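/- For every compact subset K of ℂ and every δ > 0 there exists p₀ ∈ (0,1) such that for all p ∈ (p₀, 1): K is contained in the open disk of radius 1/(1−p) centered at 0, and sup_{z ∈ K} |e_p(z) − exp(z)| < δ. In other words, e_p converges uniformly to the exponential function on every compact subset of ℂ as p → 1⁻. -/

import Mathlib

/-- `[l]_p = 1 + p + ⋯ + p^(l-1)`. -/
noncomputable def qNat (p : ℝ) (l : ℕ) : ℝ := ∑ i ∈ Finset.range l, p ^ i

/-- `[n]_p! = ∏_{l=1}^{n} [l]_p`. -/
noncomputable def qFactorial (p : ℝ) : ℕ → ℝ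
  | 0 => 1
  | n + 1 => qFactorial p n * qNat p (n + 1)

/-- The complex `p`-exponential `e_p(z) = Σ_{n=0}^∞ z^n/[n]_p!`. -/
noncomputable def qExpC (p : ℝ) (z : ℂ) : ℂ := ∑' n : ℕ, z ^ n / (qFactorial p n : ℂ)

open Filter Topology
open scoped Nat

lemma qNat_nonneg {p : ℝ} (hp : 0 ≤ p) (l : ℕ) : 0 ≤ qNat p l :=
  Finset.sum_nonneg fun i _ => pow_nonneg hp i

lemma one_le_qNat {p : ℝ} (hp : 0 ≤ p) {l : ℕ} (hl : 1 ≤ l) : 1 ≤ qNat p l := by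
  have h0 : (0:ℕ) ∈ Finset.range l := Finset.mem_range.2 (by omega)
  have := Finset.single_le_sum (f := fun i => p ^ i) (fun i _ => pow_nonneg hp i) h0
  simpa [qNat] using this

lemma qNat_mono {p : ℝ} (hp : 0 ≤ p) {l m : ℕ} (h : l ≤ m) : qNat p l ≤ qNat p m :=
  Finset.sum_le_sum_of_subset_of_nonneg (Finset.range_subset_range.2 h)
    fun i _ _ => pow_nonneg hp i

lemma qFactorial_pos {p : ℝ} (hp : 0 ≤ p) (n : ℕ) : 0 < qFactorial p n := by
  induction n with
  | zero => norm_num [qFactorial]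
  | succ n ih =>
    exact mul_pos ih (lt_of_lt_of_le one_pos (one_le_qNat hp (by omega)))

lemma qNat_one (l : ℕ) : qNat 1 l = l := by simp [qNat]

lemma qFactorial_one (n : ℕ) : qFactorial 1 n = (n ! : ℝ) := by
  induction n with
  | zero => simp [qFactorial]
  | succ n ih => simp [qFactorial, qNat_one, ih, Nat.factorial_succ]; push_cast; ring

lemma continuous_qNat (l : ℕ) : Continuous fun p : ℝ => qNat p l :=
  continuous_finset_sum _ fun i _ => continuous_pow i

lemma continuous_qFactorial (n : ℕ) : Continuous fun p : ℝ => qFactorial p n := by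
  induction n with
  | zero => simpa [qFactorial] using continuous_const
  | succ n ih => exact ih.mul (continuous_qNat (n + 1))

lemma qFactorial_tail {p c : ℝ} (hp : 0 ≤ p) (hc : 0 ≤ c) {N : ℕ}
    (h : c ≤ qNat p N) (k : ℕ) :
    qFactorial p N * c ^ k ≤ qFactorial p (N + k) := by
  induction k with
  | zero => simp
  | succ k ih =>
    have h1 : c ≤ qNat p (N + k + 1) := h.trans (qNat_mono hp (by omega))
    calc qFactorial p N * c ^ (k + 1) = qFactorial p N * c ^ k * c := by ring
      _ ≤ qFactorial p (N + k) * qNat p (N + k + 1) :=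
        mul_le_mul ih h1 hc (le_of_lt (qFactorial_pos hp _))
      _ = qFactorial p (N + (k + 1)) := rfl

lemma factorial_tail {c : ℝ} (hc : 0 ≤ c) {N : ℕ} (h : c ≤ (N : ℝ) + 1) (k : ℕ) :
    (N ! : ℝ) * c ^ k ≤ ((N + k)! : ℝ) := by
  induction k with
  | zero => simp
  | succ k ih =>
    have h1 : c ≤ ((N + k : ℕ) : ℝ) + 1 := h.trans (by push_cast; linarith [Nat.cast_nonneg (α := ℝ) k])
    calc (N ! : ℝ) * c ^ (k + 1) = (N ! : ℝ) * c ^ k * c := by ring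
      _ ≤ ((N + k)! : ℝ) * (((N + k : ℕ) : ℝ) + 1) :=
        mul_le_mul ih h1 hc (by positivity)
      _ = ((N + (k + 1))! : ℝ) := by
        rw [show N + (k + 1) = (N + k) + 1 from rfl, Nat.factorial_succ]
        push_cast; ring

/-- `e_p` converges uniformly to the exponential function on every compact
subset of `ℂ` as `p → 1⁻`: for every compact `K ⊆ ℂ` and `δ > 0` there is `p₀ ∈ (0,1)`
such that for all `p ∈ (p₀, 1)`, `K` lies in the open disk of radius `1/(1-p)` and
`sup_{z ∈ K} |e_p(z) − exp z| < δ`. -/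
theorem qExpC_tendsto_exp_uniformly_on_compacts :
    ∀ K : Set ℂ, IsCompact K → ∀ δ : ℝ, 0 < δ →
      ∃ p₀ ∈ Set.Ioo (0 : ℝ) 1, ∀ p ∈ Set.Ioo p₀ 1,
        (∀ z ∈ K, ‖z‖ < 1 / (1 - p)) ∧
        ∀ z ∈ K, ‖qExpC p z - Complex.exp z‖ < δ := by
  intro K hK δ hδ
  obtain ⟨C, hC⟩ := isBounded_iff_forall_norm_le.1 hK.isBounded
  set R : ℝ := max C 1 with hRdef
  have hR1 : (1 : ℝ) ≤ R := le_max_right _ _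
  have hR0 : (0 : ℝ) < R := lt_of_lt_of_le one_pos hR1
  have hzR : ∀ z ∈ K, ‖z‖ ≤ R := fun z hz =>
    le_trans (by exact hC z hz) (le_max_left _ _)
  -- choose N
  have hten : Tendsto (fun n : ℕ => R ^ n / (n ! : ℝ)) atTop (𝓝 0) :=
    FloorSemiring.tendsto_pow_div_factorial_atTop R
  have h1 : ∀ᶠ n : ℕ in atTop, R ^ n / (n ! : ℝ) < δ / 14 :=
    hten.eventually (gt_mem_nhds (by positivity))
  have h2 : ∀ᶠ n : ℕ in atTop, (2 * R + 1 : ℝ) ≤ n :=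
    (tendsto_natCast_atTop_atTop (R := ℝ)).eventually_ge_atTop _
  obtain ⟨N, hN1, hN2⟩ := (h1.and h2).exists
  have hNfac : (0 : ℝ) < (N ! : ℝ) := by positivity
  -- the "head" function
  set F : ℝ → ℝ := fun q =>
    ∑ n ∈ Finset.range N, R ^ n * |(qFactorial q n)⁻¹ - ((n ! : ℝ))⁻¹| with hFdef
  -- eventual properties near p = 1
  have hP : ∀ᶠ p in 𝓝 (1 : ℝ),
      0 < p ∧ 1 - 1 / R < p ∧ 2 * R ≤ qNat p N ∧ (N ! : ℝ) / 2 ≤ qFactorial p N ∧ F p < δ / 2 := by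
    have e1 : ∀ᶠ p in 𝓝 (1 : ℝ), 0 < p := eventually_gt_nhds one_pos
    have e2 : ∀ᶠ p in 𝓝 (1 : ℝ), 1 - 1 / R < p := by
      have hiR : 0 < 1 / R := by positivity
      exact eventually_gt_nhds (by linarith)
    have e3 : ∀ᶠ p in 𝓝 (1 : ℝ), 2 * R < qNat p N := by
      have : Tendsto (fun p : ℝ => qNat p N) (𝓝 1) (𝓝 (qNat 1 N)) :=
        (continuous_qNat N).continuousAt
      refine this.eventually (eventually_gt_nhds ?_)
      rw [qNat_one]; linarith
    have e4 : ∀ᶠ p in 𝓝 (1 : ℝ), (N ! : ℝ) / 2 < qFactorial p N := by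
      have : Tendsto (fun p : ℝ => qFactorial p N) (𝓝 1) (𝓝 (qFactorial 1 N)) :=
        (continuous_qFactorial N).continuousAt
      refine this.eventually (eventually_gt_nhds ?_)
      rw [qFactorial_one]; linarith
    have e5 : ∀ᶠ p in 𝓝 (1 : ℝ), F p < δ / 2 := by
      have hFt : Filter.Tendsto F (𝓝 1)
          (𝓝 (∑ n ∈ Finset.range N, R ^ n * |(qFactorial 1 n)⁻¹ - ((n ! : ℝ))⁻¹|)) := by
        simp only [hFdef]
        refine tendsto_finset_sum _ fun n _ => ?_
        refine Filter.Tendsto.mul tendsto_const_nhds ?_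
        refine Filter.Tendsto.abs (Filter.Tendsto.sub ?_ tendsto_const_nhds)
        refine Filter.Tendsto.inv₀ ((continuous_qFactorial n).continuousAt) ?_
        rw [qFactorial_one]; positivity
      have hF1 : (∑ n ∈ Finset.range N, R ^ n * |(qFactorial 1 n)⁻¹ - ((n ! : ℝ))⁻¹|) = 0 := by
        simp [qFactorial_one]
      rw [hF1] at hFt
      exact hFt.eventually (eventually_lt_nhds (by positivity))
    filter_upwards [e1, e2, e3, e4, e5] with p p1 p2 p3 p4 p5
    exact ⟨p1, p2, le_of_lt p3, le_of_lt p4, p5⟩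
  obtain ⟨ε, hε, hball⟩ := Metric.eventually_nhds_iff.1 hP
  refine ⟨max (1 - ε) (1 / 2), ⟨lt_of_lt_of_le (by norm_num) (le_max_right _ _),
    max_lt (by linarith) (by norm_num)⟩, ?_⟩
  intro p hp
  have hpemem : dist p 1 < ε := by
    rw [Real.dist_eq, abs_of_nonpos (by linarith [hp.2])]
    have := lt_of_le_of_lt (le_max_left (1 - ε) (1 / 2)) hp.1
    linarith
  obtain ⟨hp0, hpR, hqN, hqF, hFp⟩ := hball hpemem
  have hp0' : (0 : ℝ) ≤ p := le_of_lt hp0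
  have hp1 : p < 1 := hp.2
  have h1p : 0 < 1 - p := by linarith
  have hRlt : R < 1 / (1 - p) := by
    rw [lt_div_iff₀ h1p]
    have h1Rp : 1 - p < 1 / R := by linarith
    calc R * (1 - p) < R * (1 / R) := by
          exact mul_lt_mul_of_pos_left h1Rp hR0
      _ = 1 := by field_simp
  constructor
  · exact fun z hz => lt_of_le_of_lt (hzR z hz) hRlt
  -- main estimate
  intro z hz
  have hzR' : ‖z‖ ≤ R := hzR z hz
  have h2R : (0 : ℝ) ≤ 2 * R := by linarith
  -- bounds on tails
  have hqFtail : ∀ k : ℕ, (N ! : ℝ) / 2 * (2 * R) ^ k ≤ qFactorial p (N + k) := by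
    intro k
    calc (N ! : ℝ) / 2 * (2 * R) ^ k ≤ qFactorial p N * (2 * R) ^ k :=
          mul_le_mul_of_nonneg_right hqF (by positivity)
      _ ≤ qFactorial p (N + k) := qFactorial_tail hp0' h2R hqN k
  have hfactail : ∀ k : ℕ, (N ! : ℝ) * (2 * R) ^ k ≤ ((N + k)! : ℝ) :=
    factorial_tail h2R (by push_cast; linarith) 
  -- the real comparison series
  set g : ℕ → ℝ := fun n => R ^ n * |(qFactorial p n)⁻¹ - ((n ! : ℝ))⁻¹| with hgdef
  have hqFpos : ∀ n, (0 : ℝ) < qFactorial p n := qFactorial_pos hp0'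
  have hhb : ∀ n, R ^ n / qFactorial p n + R ^ n / (n ! : ℝ) ≥ g n := by
    intro n
    have h1 : |(qFactorial p n)⁻¹ - ((n ! : ℝ))⁻¹| ≤ (qFactorial p n)⁻¹ + ((n ! : ℝ))⁻¹ := by
      refine (abs_sub _ _).trans ?_
      rw [abs_of_nonneg (inv_nonneg.2 (hqFpos n).le), abs_of_nonneg (by positivity)]
    calc g n ≤ R ^ n * ((qFactorial p n)⁻¹ + ((n ! : ℝ))⁻¹) :=
          mul_le_mul_of_nonneg_left h1 (by positivity)
      _ = R ^ n / qFactorial p n + R ^ n / (n ! : ℝ) := by ring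
  -- summability of R^n / qFactorial p n
  have hgeo : Summable fun k : ℕ => ((1 : ℝ) / 2) ^ k :=
    summable_geometric_of_lt_one (by norm_num) (by norm_num)
  have hhq_bound : ∀ k : ℕ, R ^ (k + N) / qFactorial p (k + N) ≤
      2 * (R ^ N / N !) * ((1 : ℝ) / 2) ^ k := by
    intro k
    have hb : (N ! : ℝ) / 2 * (2 * R) ^ k ≤ qFactorial p (k + N) := by
      rw [add_comm k N]; exact hqFtail k
    have hbpos : (0 : ℝ) < (N ! : ℝ) / 2 * (2 * R) ^ k := by positivity
    calc R ^ (k + N) / qFactorial p (k + N)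
        ≤ R ^ (k + N) / ((N ! : ℝ) / 2 * (2 * R) ^ k) :=
          div_le_div_of_nonneg_left (by positivity) hbpos hb
      _ = 2 * (R ^ N / N !) * ((1 : ℝ) / 2) ^ k := by
          rw [pow_add, mul_pow, div_pow]
          field_simp
          ring
  have hhf_bound : ∀ k : ℕ, R ^ (k + N) / ((k + N)! : ℝ) ≤
      (R ^ N / N !) * ((1 : ℝ) / 2) ^ k := by
    intro k
    have hb : (N ! : ℝ) * (2 * R) ^ k ≤ ((k + N)! : ℝ) := by
      rw [add_comm k N]; exact hfactail k
    have hbpos : (0 : ℝ) < (N ! : ℝ) * (2 * R) ^ k := by positivity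
    calc R ^ (k + N) / ((k + N)! : ℝ)
        ≤ R ^ (k + N) / ((N ! : ℝ) * (2 * R) ^ k) :=
          div_le_div_of_nonneg_left (by positivity) hbpos hb
      _ = (R ^ N / N !) * ((1 : ℝ) / 2) ^ k := by
          rw [pow_add, mul_pow, div_pow]
          field_simp
          ring
  have hsum_hq : Summable fun n : ℕ => R ^ n / qFactorial p n := by
    rw [← summable_nat_add_iff N]
    refine Summable.of_nonneg_of_le (fun k => div_nonneg (by positivity) (hqFpos _).le)
      (fun k => hhq_bound k) (hgeo.mul_left _)
  have hsum_hf : Summable fun n : ℕ => R ^ n / (n ! : ℝ) :=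
    Real.summable_pow_div_factorial R
  have hsumg : Summable g :=
    Summable.of_nonneg_of_le (fun n => by positivity) (fun n => hhb n) (hsum_hq.add hsum_hf)
  -- summability of the complex series
  have hsuma : Summable fun n : ℕ => z ^ n / (qFactorial p n : ℂ) := by
    refine Summable.of_norm ?_
    refine Summable.of_nonneg_of_le (fun n => norm_nonneg _) (fun n => ?_) hsum_hq
    rw [norm_div, norm_pow]
    refine div_le_div₀ (by positivity) (pow_le_pow_left₀ (norm_nonneg _) (by exact hzR') n) (hqFpos n) ?_
    rw [Complex.norm_real, Real.norm_eq_abs, abs_of_pos (hqFpos n)]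
  have hsumb : Summable fun n : ℕ => z ^ n / (n ! : ℂ) :=
    NormedSpace.expSeries_div_summable z
  -- rewrite the difference as a tsum
  have hdiff : qExpC p z - Complex.exp z =
      ∑' n : ℕ, (z ^ n / (qFactorial p n : ℂ) - z ^ n / (n ! : ℂ)) := by
    rw [qExpC, Complex.exp_eq_exp_ℂ, NormedSpace.exp_eq_tsum_div, Summable.tsum_sub hsuma hsumb]
  -- pointwise norm bound
  have hnorm : ∀ n : ℕ, ‖z ^ n / (qFactorial p n : ℂ) - z ^ n / (n ! : ℂ)‖ ≤ g n := by
    intro n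
    have : z ^ n / (qFactorial p n : ℂ) - z ^ n / (n ! : ℂ)
        = z ^ n * ((((qFactorial p n)⁻¹ - ((n ! : ℝ))⁻¹ : ℝ)) : ℂ) := by
      push_cast
      rw [mul_sub]
      ring
    rw [this, norm_mul, norm_pow, Complex.norm_real, Real.norm_eq_abs]
    refine mul_le_mul_of_nonneg_right ?_ (abs_nonneg _)
    exact pow_le_pow_left₀ (norm_nonneg _) (by exact hzR') n
  have hsumnorm : Summable fun n : ℕ => ‖z ^ n / (qFactorial p n : ℂ) - z ^ n / (n ! : ℂ)‖ :=
    Summable.of_nonneg_of_le (fun n => norm_nonneg _) hnorm hsumg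
  -- assemble
  have key : ‖qExpC p z - Complex.exp z‖ ≤ ∑' n, g n := by
    rw [hdiff]
    exact (norm_tsum_le_tsum_norm hsumnorm).trans (Summable.tsum_le_tsum hnorm hsumnorm hsumg)
  have hsplit : ∑' n, g n = (∑ n ∈ Finset.range N, g n) + ∑' k, g (k + N) :=
    (Summable.sum_add_tsum_nat_add N hsumg).symm
  have htail : ∑' k, g (k + N) ≤ 6 * (R ^ N / N !) := by
    have hgk : ∀ k : ℕ, g (k + N) ≤ 3 * (R ^ N / N !) * ((1 : ℝ) / 2) ^ k := by
      intro k
      calc g (k + N) ≤ R ^ (k + N) / qFactorial p (k + N) + R ^ (k + N) / (k + N)! :=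
            hhb (k + N)
        _ ≤ 2 * (R ^ N / N !) * ((1 : ℝ) / 2) ^ k + (R ^ N / N !) * ((1 : ℝ) / 2) ^ k :=
            add_le_add (hhq_bound k) (hhf_bound k)
        _ = 3 * (R ^ N / N !) * ((1 : ℝ) / 2) ^ k := by ring
    calc ∑' k, g (k + N) ≤ ∑' k : ℕ, 3 * (R ^ N / N !) * ((1 : ℝ) / 2) ^ k := by
          refine Summable.tsum_le_tsum hgk ((summable_nat_add_iff N).2 hsumg) (hgeo.mul_left _)
      _ = 3 * (R ^ N / N !) * 2 := by rw [tsum_mul_left, tsum_geometric_two]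
      _ = 6 * (R ^ N / N !) := by ring
  have hhead : (∑ n ∈ Finset.range N, g n) < δ / 2 := hFp
  have htail' : 6 * (R ^ N / N !) < δ / 2 := by
    have : R ^ N / N ! < δ / 14 := hN1
    linarith
  calc ‖qExpC p z - Complex.exp z‖ ≤ ∑' n, g n := key
    _ = (∑ n ∈ Finset.range N, g n) + ∑' k, g (k + N) := hsplit
    _ < δ / 2 + δ / 2 := add_lt_add_of_lt_of_le hhead (htail.trans (le_of_lt htail'))
    _ = δ := by ring
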